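/- Consider the ℚ-vector space of triples (x, x', y), where x : ℤ/3 → ℚ, x' : ℤ/3 → ℚ and y : ℤ/3 × ℤ/3 → ℚ, satisfying for all i, j ∈ ℤ/3 the relations y(i,j) = y(i−1,j) − x(i) and y(i,j) = y(i,j−1) + x'(j). This solution space is a ℚ-linear subspace of ℚ³ ⊕ ℚ³ ⊕ ℚ⁹ of dimension exactly 5. -/

import Mathlib

abbrev V := (ZMod 3 → ℚ) × (ZMod 3 → ℚ) × (ZMod 3 × ZMod 3 → ℚ)

def Wsol : Submodule ℚ V where
  carrier := {v | ∀ i j : ZMod 3,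
      v.2.2 (i, j) = v.2.2 (i - 1, j) - v.1 i ∧
      v.2.2 (i, j) = v.2.2 (i, j - 1) + v.2.1 j}
  add_mem' := by
    intro p q hp hq i j
    obtain ⟨h1, h2⟩ := hp i j
    obtain ⟨h3, h4⟩ := hq i j
    constructor <;> simp only [Prod.fst_add, Prod.snd_add, Pi.add_apply] <;> linarith
  zero_mem' := by intro i j; simp
  smul_mem' := by
    intro c p hp i j
    obtain ⟨h1, h2⟩ := hp i j
    constructor <;>
      simp only [Prod.smul_fst, Prod.smul_snd, Pi.smul_apply, smul_eq_mul]
    · rw [h1]; ring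
    · rw [h2]; ring

def pi5 : Wsol →ₗ[ℚ] (ℚ × ℚ × ℚ × ℚ × ℚ) where
  toFun p := (p.1.1 0, p.1.1 1, p.1.2.1 0, p.1.2.1 1, p.1.2.2 (0, 0))
  map_add' _ _ := rfl
  map_smul' _ _ := rfl

lemma z01 : (0 : ZMod 3) - 1 = 2 := by decide
lemma z11 : (1 : ZMod 3) - 1 = 0 := by decide
lemma z21 : (2 : ZMod 3) - 1 = 1 := by decide

lemma pi5_inj : Function.Injective pi5 := by
  rw [← LinearMap.ker_eq_bot, LinearMap.ker_eq_bot']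
  rintro ⟨⟨x, x', y⟩, hp⟩ h
  have h0 : x 0 = 0 := congrArg Prod.fst h
  have h1 : x 1 = 0 := congrArg (Prod.fst ∘ Prod.snd) h
  have h2 : x' 0 = 0 := congrArg (Prod.fst ∘ Prod.snd ∘ Prod.snd) h
  have h3 : x' 1 = 0 := congrArg (Prod.fst ∘ Prod.snd ∘ Prod.snd ∘ Prod.snd) h
  have h4 : y (0, 0) = 0 := congrArg (Prod.snd ∘ Prod.snd ∘ Prod.snd ∘ Prod.snd) h
  have hp' : ∀ i j : ZMod 3, y (i, j) = y (i - 1, j) - x i ∧ y (i, j) = y (i, j - 1) + x' j := hp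
  have r10 := hp' 1 0; have r20 := hp' 2 0; have r00 := hp' 0 0
  have r01 := hp' 0 1; have r02 := hp' 0 2
  have r11 := hp' 1 1; have r12 := hp' 1 2; have r21 := hp' 2 1; have r22 := hp' 2 2
  simp only [z01, z11, z21] at r10 r20 r00 r01 r02 r11 r12 r21 r22
  have y10 : y (1, 0) = 0 := by rw [r10.1, h4, h1]; ring
  have y20 : y (2, 0) = 0 := by have := r00.1; rw [h4, h0] at this; linarith
  have x2 : x 2 = 0 := by have := r20.1; rw [y20, y10] at this; linarith
  have y01 : y (0, 1) = 0 := by rw [r01.2, h4, h3]; ring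
  have y02 : y (0, 2) = 0 := by have := r00.2; rw [h4, h2] at this; linarith
  have x'2 : x' 2 = 0 := by have := r02.2; rw [y02, y01] at this; linarith
  have y11 : y (1, 1) = 0 := by rw [r11.1, y01, h1]; ring
  have y21 : y (2, 1) = 0 := by rw [r21.1, y11, x2]; ring
  have y12 : y (1, 2) = 0 := by rw [r12.1, y02, h1]; ring
  have y22 : y (2, 2) = 0 := by rw [r22.1, y12, x2]; ring
  apply Subtype.ext
  refine Prod.ext (funext fun i => ?_) (Prod.ext (funext fun j => ?_) (funext fun p => ?_))
  · fin_cases i <;> simpa using by assumption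
  · fin_cases j <;> simpa using by assumption
  · obtain ⟨i, j⟩ := p
    fin_cases i <;> fin_cases j <;> simpa using by assumption

lemma pi5_surj : Function.Surjective pi5 := by
  rintro ⟨a, b, c, d, e⟩
  refine ⟨⟨(fun i => if i = 0 then a else if i = 1 then b else -a - b,
           fun j => if j = 0 then c else if j = 1 then d else -c - d,
           fun p => e + (if p.2 = 0 then 0 else if p.2 = 1 then d else -c)
                     - (if p.1 = 0 then 0 else if p.1 = 1 then b else -a)), ?_⟩, ?_⟩
  · intro i j
    fin_cases i <;> fin_cases j <;>
      constructor <;>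
      simp [z01, z11, z21, show ((-1:ZMod 3)) ≠ 1 from by decide,
        show ((-1:ZMod 3)) ≠ 0 from by decide, show ((-1:ZMod 3)) = 2 from by decide,
        show ((2:ZMod 3)) ≠ 0 from by decide, show ((2:ZMod 3)) ≠ 1 from by decide,
        show ((1:ZMod 3)) ≠ 0 from by decide, show (show ZMod 3 from (0 : Fin 3)) = 0 from rfl, show (show ZMod 3 from (1 : Fin 3)) = 1 from rfl, show (show ZMod 3 from (2 : Fin 3)) = 2 from rfl] <;> ring
  · simp [pi5]

/-- The set of triples `(x, x', y)` with `x, x' : ℤ/3 → ℚ` and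
`y : ℤ/3 × ℤ/3 → ℚ` satisfying `y(i,j) = y(i-1,j) - x(i)` and `y(i,j) = y(i,j-1) + x'(j)`
for all `i, j ∈ ℤ/3` is a `ℚ`-linear subspace of `ℚ³ ⊕ ℚ³ ⊕ ℚ⁹` of dimension exactly 5. -/
theorem solution_space_P3P3_dim_five :
    ∃ W : Submodule ℚ ((ZMod 3 → ℚ) × (ZMod 3 → ℚ) × (ZMod 3 × ZMod 3 → ℚ)),
      (W : Set ((ZMod 3 → ℚ) × (ZMod 3 → ℚ) × (ZMod 3 × ZMod 3 → ℚ)))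
          = {v | ∀ i j : ZMod 3,
              v.2.2 (i, j) = v.2.2 (i - 1, j) - v.1 i ∧
              v.2.2 (i, j) = v.2.2 (i, j - 1) + v.2.1 j} ∧
      Module.finrank ℚ W = 5 := by
  refine ⟨Wsol, rfl, ?_⟩
  have e := LinearEquiv.ofBijective pi5 ⟨pi5_inj, pi5_surj⟩
  rw [e.finrank_eq]
  simp
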